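/- arXiv:2502.15967 — 4 statements merged into one kernel-verified Lean document; each statement's English description precedes it below -/
import Mathlib

section
/- Let G be a finite group, A ≤ Aut(G), and let x, y ∈ G be elements of prime order p such that x^A and y^A lie in the same connected component of Δ(G,A). Then either both C_G(x) and C_G(y) are not p-groups, or ⟨x⟩ = ⟨y⟩^a for some a ∈ A. -/
open Subgroup

/-- The A-orbit of x under a subgroup A of Aut(G). -/
def aorb {G : Type*} [Group G] (A : Subgroup (MulAut G)) (x : G) : Set G :=
  {y | ∃ a ∈ A, a x = y}

/-- The vertex set of the automorphic cyclic graph: A-orbits of nontrivial elements. -/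
def DeltaVerts (G : Type*) [Group G] (A : Subgroup (MulAut G)) :=
  {S : Set G // ∃ x : G, x ≠ 1 ∧ S = aorb A x}

/-- The automorphic cyclic graph Δ(G,A). -/
def Delta (G : Type*) [Group G] (A : Subgroup (MulAut G)) :
    SimpleGraph (DeltaVerts G A) where
  Adj S T := S ≠ T ∧ ∃ x ∈ S.1, ∃ y ∈ T.1,
    IsCyclic (Subgroup.closure {x, y} : Subgroup G)
  symm := by
    constructor
    rintro S T ⟨hne, x, hx, y, hy, hc⟩
    exact ⟨hne.symm, y, hy, x, hx, by rwa [Set.pair_comm]⟩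
  loopless := ⟨fun S h => h.1 rfl⟩

/-- The vertex corresponding to the A-orbit of a nontrivial element x. -/
def vtx {G : Type*} [Group G] (A : Subgroup (MulAut G)) (x : G) (hx : x ≠ 1) :
    DeltaVerts G A :=
  ⟨aorb A x, x, hx, rfl⟩

section Aux

variable {G : Type*} [Group G]

lemma aux_map_centralizer (e : MulAut G) (x : G) :
    (Subgroup.centralizer {x}).map e.toMonoidHom = Subgroup.centralizer {e x} := by
  ext g
  simp only [Subgroup.mem_map, Subgroup.mem_centralizer_iff, Set.mem_singleton_iff,
    forall_eq, MulEquiv.coe_toMonoidHom]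
  constructor
  · rintro ⟨h, hc, rfl⟩
    rw [← map_mul, ← map_mul, hc]
  · intro hg
    refine ⟨e.symm g, ?_, e.apply_symm_apply g⟩
    apply e.injective
    rw [map_mul, map_mul, e.apply_symm_apply, hg]

lemma aux_unique_p {H : Type*} [Group H] [Finite H] (hc : IsCyclic H) {p : ℕ}
    (hp : p.Prime) {u v : H} (hu : orderOf u = p) (hv : orderOf v = p) :
    u ∈ Subgroup.zpowers v := by
  classical
  have : Fintype H := Fintype.ofFinite H
  have key : ∀ w : H, orderOf w = p →
      (Subgroup.zpowers w : Set H).toFinset = ({a : H | a ^ p = 1} : Finset H) := by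
    intro w hw
    refine Finset.eq_of_subset_of_card_le ?_ ?_
    · intro a ha
      rw [Set.mem_toFinset] at ha
      obtain ⟨k, rfl⟩ := Subgroup.mem_zpowers_iff.mp ha
      simp only [Finset.mem_filter, Finset.mem_univ, true_and]
      rw [← zpow_natCast, ← zpow_mul, mul_comm, zpow_mul, zpow_natCast, ← hw,
        pow_orderOf_eq_one, one_zpow]
    · calc ({a : H | a ^ p = 1} : Finset H).card ≤ p :=
            IsCyclic.card_pow_eq_one_le hp.pos
        _ = (Subgroup.zpowers w : Set H).toFinset.card := by
            rw [Set.toFinset_card]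
            simp only [SetLike.coe_sort_coe, Fintype.card_zpowers, hw]
  have h1 : u ∈ (Subgroup.zpowers u : Set H).toFinset := by
    rw [Set.mem_toFinset]; exact Subgroup.mem_zpowers u
  rw [key u hu, ← key v hv, Set.mem_toFinset] at h1
  exact h1

lemma aux_apply_mem_zpowers (e : MulAut G) {u v : G} (h : u ∈ zpowers v) :
    e u ∈ zpowers (e v) := by
  obtain ⟨k, rfl⟩ := Subgroup.mem_zpowers_iff.mp h
  exact Subgroup.mem_zpowers_iff.mpr ⟨k, (map_zpow e v k).symm⟩

lemma aux_ne_one {A : Subgroup (MulAut G)} {S : DeltaVerts G A} {z : G} (hz : z ∈ S.1) :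
    z ≠ 1 := by
  obtain ⟨x0, hx0, hS⟩ := S.2
  rw [hS] at hz
  obtain ⟨a, -, rfl⟩ := hz
  intro h
  exact hx0 (a.injective (h.trans (map_one a).symm))

lemma aux_transfer {A : Subgroup (MulAut G)} {y : G} {S : DeltaVerts G A} {z z' : G}
    (hz : z ∈ S.1) (hz' : z' ∈ S.1) (h : ∃ c ∈ A, c y ∈ zpowers z) :
    ∃ c ∈ A, c y ∈ zpowers z' := by
  obtain ⟨x0, hx0, hS⟩ := S.2
  rw [hS] at hz hz'
  obtain ⟨a, ha, rfl⟩ := hz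
  obtain ⟨b, hb, rfl⟩ := hz'
  obtain ⟨c, hc, hm⟩ := h
  refine ⟨b * a⁻¹ * c, mul_mem (mul_mem hb (inv_mem ha)) hc, ?_⟩
  have h2 := aux_apply_mem_zpowers (b * a⁻¹) hm
  have e1 : (b * a⁻¹) (a x0) = b x0 := by
    simp [MulAut.mul_apply]
  have e2 : (b * a⁻¹ * c) y = (b * a⁻¹) (c y) := by
    simp [MulAut.mul_apply]
  rw [e2]
  rwa [e1] at h2

end Aux

section Main

variable {G : Type*} [Group G] [Finite G]

lemma aux_step {A : Subgroup (MulAut G)} {p : ℕ} (hp : p.Prime) {y : G}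
    (hyo : orderOf y = p) (hpy : IsPGroup p (Subgroup.centralizer {y}))
    {S T : DeltaVerts G A} (hadj : (Delta G A).Adj S T)
    (hS : ∃ z ∈ S.1, ∃ c ∈ A, c y ∈ zpowers z) :
    ∃ z ∈ T.1, ∃ c ∈ A, c y ∈ zpowers z := by
  obtain ⟨-, z', hz'S, w', hw'T, hcyc⟩ := hadj
  obtain ⟨z, hzS, hdata⟩ := hS
  obtain ⟨c, hcA, hcy⟩ := aux_transfer hzS hz'S hdata
  set u := c y with hu
  have huo : orderOf u = p := by
    rw [hu, ← hyo]
    exact orderOf_injective c.toMonoidHom c.injective y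
  have hw1 : w' ≠ 1 := aux_ne_one hw'T
  set H : Subgroup G := Subgroup.closure ({z', w'} : Set G) with hH
  have hz'H : z' ∈ H := Subgroup.subset_closure (by simp)
  have hw'H : w' ∈ H := Subgroup.subset_closure (by simp)
  have huH : u ∈ H := Subgroup.zpowers_le.mpr hz'H hcy
  -- z' and w' commute
  have hcomm : Commute z' w' := by
    letI : CommGroup H := IsCyclic.commGroup
    have h2 : (⟨z', hz'H⟩ : H) * ⟨w', hw'H⟩ = ⟨w', hw'H⟩ * ⟨z', hz'H⟩ := mul_comm _ _
    exact Subtype.ext_iff.mp h2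
  -- w' centralizes u
  have hwcu : w' ∈ Subgroup.centralizer {u} := by
    rw [Subgroup.mem_centralizer_iff]
    intro g hg
    rw [Set.mem_singleton_iff] at hg
    subst hg
    obtain ⟨k, hk⟩ := Subgroup.mem_zpowers_iff.mp hcy
    have : Commute w' u := by rw [← hk]; exact (hcomm.symm).zpow_right k
    exact this.symm.eq
  -- the centralizer of u is a p-group
  have hpu : IsPGroup p (Subgroup.centralizer {u}) := by
    rw [hu, ← aux_map_centralizer c y]
    exact hpy.map _
  -- order of w' is a power of p
  obtain ⟨k, hk⟩ := hpu ⟨w', hwcu⟩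
  have hwp : w' ^ (p ^ k) = 1 := by
    have := congrArg (Subtype.val) hk
    simpa using this
  obtain ⟨m, -, hm⟩ := (Nat.dvd_prime_pow hp).mp (orderOf_dvd_of_pow_eq_one hwp)
  have hm1 : m ≠ 0 := by
    rintro rfl
    rw [pow_zero, orderOf_eq_one_iff] at hm
    exact hw1 hm
  -- w2 has order exactly p
  set w2 := w' ^ (p ^ (m - 1)) with hw2
  have hw2z : w2 ∈ zpowers w' := Subgroup.pow_mem _ (Subgroup.mem_zpowers w') _
  have hw2H : w2 ∈ H := Subgroup.pow_mem _ hw'H _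
  have hw2o : orderOf w2 = p := by
    rw [hw2, orderOf_pow, hm]
    have hd : Nat.gcd (p ^ m) (p ^ (m - 1)) = p ^ (m - 1) :=
      Nat.gcd_eq_right (pow_dvd_pow p (Nat.sub_le m 1))
    rw [hd]
    have hms : m - 1 + 1 = m := Nat.succ_pred_eq_of_ne_zero hm1
    rw [Nat.pow_div (Nat.sub_le m 1) hp.pos]
    have : m - (m - 1) = 1 := by omega
    rw [this, pow_one]
  -- apply uniqueness in the cyclic group H
  have huHo : orderOf (⟨u, huH⟩ : H) = p := by
    rw [Subgroup.orderOf_mk]; exact huo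
  have hw2Ho : orderOf (⟨w2, hw2H⟩ : H) = p := by
    rw [Subgroup.orderOf_mk]; exact hw2o
  have hmemH : (⟨u, huH⟩ : H) ∈ Subgroup.zpowers (⟨w2, hw2H⟩ : H) :=
    aux_unique_p hcyc hp huHo hw2Ho
  obtain ⟨j, hj⟩ := Subgroup.mem_zpowers_iff.mp hmemH
  have huw2 : u ∈ zpowers w2 := by
    refine Subgroup.mem_zpowers_iff.mpr ⟨j, ?_⟩
    have := congrArg (Subtype.val) hj
    simpa using this
  exact ⟨w', hw'T, c, hcA, Subgroup.zpowers_le.mpr hw2z huw2⟩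

lemma aux_half (A : Subgroup (MulAut G)) {p : ℕ} (hp : p.Prime) {x y : G}
    (hx : x ≠ 1) (hy : y ≠ 1) (hxo : orderOf x = p) (hyo : orderOf y = p)
    (hpy : IsPGroup p (Subgroup.centralizer {y}))
    (hreach : (Delta G A).Reachable (vtx A y hy) (vtx A x hx)) :
    ∃ a ∈ A, Subgroup.zpowers x = Subgroup.map a.toMonoidHom (Subgroup.zpowers y) := by
  haveI : Fact p.Prime := ⟨hp⟩
  obtain ⟨w⟩ := hreach
  have key : ∀ (S T : DeltaVerts G A), (Delta G A).Walk S T →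
      (∃ z ∈ S.1, ∃ c ∈ A, c y ∈ zpowers z) → (∃ z ∈ T.1, ∃ c ∈ A, c y ∈ zpowers z) := by
    intro S T w
    induction w with
    | nil => exact id
    | cons h _ ih => exact fun hS => ih (aux_step hp hyo hpy h hS)
  have hbase : ∃ z ∈ (vtx A y hy).1, ∃ c ∈ A, c y ∈ zpowers z :=
    ⟨y, ⟨1, one_mem A, rfl⟩, 1, one_mem A, Subgroup.mem_zpowers y⟩
  obtain ⟨z, hzx, hzdata⟩ := key _ _ w hbase
  obtain ⟨d, hdA, rfl⟩ := hzx
  obtain ⟨c, hcA, hcy⟩ := hzdata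
  refine ⟨d⁻¹ * c, mul_mem (inv_mem hdA) hcA, ?_⟩
  have hmem : (d⁻¹ * c) y ∈ zpowers x := by
    have h2 := aux_apply_mem_zpowers d⁻¹ hcy
    have e1 : (d⁻¹ : MulAut G) (d x) = x := by simp
    have e2 : (d⁻¹ * c) y = (d⁻¹ : MulAut G) (c y) := by simp [MulAut.mul_apply]
    rw [e2]
    rwa [e1] at h2
  set a := d⁻¹ * c with ha
  have hao : orderOf (a y) = p := by
    rw [← hyo]
    exact orderOf_injective a.toMonoidHom a.injective y
  have hane : a y ≠ 1 := by
    intro h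
    rw [h, orderOf_one] at hao
    exact hp.one_lt.ne' hao.symm
  -- x ∈ zpowers (a y)
  have hcard : Nat.card (zpowers x) = p := by rw [Nat.card_zpowers, hxo]
  have hyK : (⟨a y, hmem⟩ : zpowers x) ≠ 1 := by
    intro h
    exact hane (Subtype.ext_iff.mp h)
  have hxK : (⟨x, Subgroup.mem_zpowers x⟩ : zpowers x) ∈
      Subgroup.zpowers (⟨a y, hmem⟩ : zpowers x) :=
    mem_zpowers_of_prime_card hcard hyK
  obtain ⟨j, hj⟩ := Subgroup.mem_zpowers_iff.mp hxK
  have hxmem : x ∈ zpowers (a y) := by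
    refine Subgroup.mem_zpowers_iff.mpr ⟨j, ?_⟩
    have := congrArg (Subtype.val) hj
    simpa using this
  have heq : Subgroup.zpowers x = Subgroup.zpowers (a y) :=
    le_antisymm (Subgroup.zpowers_le.mpr hxmem) (Subgroup.zpowers_le.mpr hmem)
  rw [heq, MonoidHom.map_zpowers a.toMonoidHom y]
  rfl

end Main

theorem stmt1 {G : Type*} [Group G] [Finite G] (A : Subgroup (MulAut G))
    (p : ℕ) (hp : p.Prime) (x y : G) (hx : x ≠ 1) (hy : y ≠ 1)
    (hxo : orderOf x = p) (hyo : orderOf y = p)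
    (hreach : (Delta G A).Reachable (vtx A x hx) (vtx A y hy)) :
    (¬ IsPGroup p (Subgroup.centralizer {x}) ∧ ¬ IsPGroup p (Subgroup.centralizer {y})) ∨
      ∃ a ∈ A, Subgroup.zpowers x = Subgroup.map a.toMonoidHom (Subgroup.zpowers y) := by
  by_cases h2 : IsPGroup p (Subgroup.centralizer {y})
  · exact Or.inr (aux_half A hp hx hy hxo hyo h2 hreach.symm)
  by_cases h1 : IsPGroup p (Subgroup.centralizer {x})
  · obtain ⟨a, haA, haeq⟩ := aux_half A hp hy hx hyo hxo h1 hreach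
    refine Or.inr ⟨a⁻¹, inv_mem haA, ?_⟩
    rw [haeq, Subgroup.map_map]
    have : ((a⁻¹ : MulAut G).toMonoidHom.comp a.toMonoidHom) = MonoidHom.id G := by
      ext g; simp
    rw [this, Subgroup.map_id]
  · exact Or.inl ⟨h1, h2⟩
end

section
/- Let G be a finite p-group and A ≤ Aut(G). If A does not act transitively on the set of subgroups of G of order p, then Δ(G,A) is disconnected. -/
open Subgroup

set_option linter.unusedSectionVars false

section Aux
variable {G : Type*} [Group G] [Finite G]

/-- The canonical order-`p` element below a nontrivial element. -/
noncomputable def Pt (p : ℕ) (x : G) : G := x ^ (orderOf x / p)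

lemma orderOf_Pt {p : ℕ} (hp : p.Prime) (hG : IsPGroup p G) {x : G} (hx : x ≠ 1) :
    orderOf (Pt p x) = p := by
  obtain ⟨n, hn⟩ := hG x
  obtain ⟨k, -, hk⟩ := (Nat.dvd_prime_pow hp).mp (orderOf_dvd_of_pow_eq_one hn)
  have hk1 : k ≠ 0 := by
    rintro rfl
    exact hx (orderOf_eq_one_iff.mp (by simpa using hk))
  obtain ⟨k, rfl⟩ := Nat.exists_eq_succ_of_ne_zero hk1
  have hdiv : orderOf x / p = p ^ k := by
    rw [hk, pow_succ, Nat.mul_div_cancel _ hp.pos]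
  rw [Pt, hdiv, orderOf_pow' x (pow_ne_zero _ hp.pos.ne'), hk,
    Nat.gcd_eq_right (pow_dvd_pow p (Nat.le_succ k)), pow_succ,
    Nat.mul_div_cancel_left _ (pow_pos hp.pos k)]

/-- In a cyclic subgroup of a p-group, any two order-p elements generate the same subgroup. -/
lemma zpowers_eq_of_orderOf_eq {p : ℕ} (hp : p.Prime) (hG : IsPGroup p G)
    {K : Subgroup G} (hK : IsCyclic K) {z w : G} (hz : z ∈ K) (hw : w ∈ K)
    (hzo : orderOf z = p) (hwo : orderOf w = p) :
    zpowers z = zpowers w := by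
  obtain ⟨g, hg⟩ := hK.exists_generator
  set c : G := (g : G) with hc
  have key : ∀ t : G, t ∈ K → orderOf t = p → zpowers t = zpowers (Pt p c) := by
    intro t ht hto
    obtain ⟨m, hm⟩ := mem_zpowers_iff.mp (hg ⟨t, ht⟩)
    have hm' : c ^ m = t := by
      have := congrArg (Subtype.val) hm
      simpa [SubgroupClass.coe_zpow] using this
    have ht1 : t ≠ 1 := by
      intro h; rw [h, orderOf_one] at hto; exact hp.one_lt.ne' hto.symm
    have hc1 : c ≠ 1 := by
      intro h; rw [h, one_zpow] at hm'; exact ht1 hm'.symm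
    obtain ⟨n, hn⟩ := hG c
    obtain ⟨k, -, hk⟩ := (Nat.dvd_prime_pow hp).mp (orderOf_dvd_of_pow_eq_one hn)
    have hk1 : k ≠ 0 := by
      rintro rfl
      exact hc1 (orderOf_eq_one_iff.mp (by simpa using hk))
    obtain ⟨k, rfl⟩ := Nat.exists_eq_succ_of_ne_zero hk1
    have hdiv : orderOf c / p = p ^ k := by
      rw [hk, pow_succ, Nat.mul_div_cancel _ hp.pos]
    have h1 : c ^ (m * (p : ℤ)) = 1 := by
      rw [zpow_mul, hm', zpow_natCast, ← hto, pow_orderOf_eq_one]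
    have h2 : ((p : ℤ) ^ (k + 1)) ∣ m * p := by
      have := orderOf_dvd_iff_zpow_eq_one.mpr h1
      rw [hk] at this
      exact_mod_cast this
    have h3 : ((p : ℤ) ^ k) ∣ m := by
      rw [pow_succ] at h2
      exact (mul_dvd_mul_iff_right (by exact_mod_cast hp.pos.ne' : (p:ℤ) ≠ 0)).mp h2
    obtain ⟨m', rfl⟩ := h3
    have htmem : t ∈ zpowers (Pt p c) := by
      rw [← hm', zpow_mul, Pt, hdiv, ← zpow_natCast c (p ^ k)]
      exact ⟨m', by push_cast; rfl⟩
    have hle : zpowers t ≤ zpowers (Pt p c) := zpowers_le.mpr htmem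
    refine eq_of_le_of_card_ge hle ?_
    rw [Nat.card_zpowers, Nat.card_zpowers, hto, orderOf_Pt hp hG hc1]
  rw [key z hz hzo, key w hw hwo]

variable (A : Subgroup (MulAut G))

/-- The relation "in the same A-orbit" on subgroups of G. -/
def relA (S T : Subgroup G) : Prop := ∃ a ∈ A, Subgroup.map a.toMonoidHom S = T

lemma relA_refl (S : Subgroup G) : relA A S S :=
  ⟨1, A.one_mem, by ext x; simp [Subgroup.mem_map]⟩

lemma relA_symm {S T : Subgroup G} (h : relA A S T) : relA A T S := by
  obtain ⟨a, ha, h⟩ := h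
  refine ⟨a⁻¹, A.inv_mem ha, ?_⟩
  rw [← h, Subgroup.map_map]
  have : (a⁻¹.toMonoidHom.comp a.toMonoidHom) = MonoidHom.id G :=
    MonoidHom.ext fun x => a.symm_apply_apply x
  rw [this, Subgroup.map_id]

lemma relA_trans {S T U : Subgroup G} (h1 : relA A S T) (h2 : relA A T U) : relA A S U := by
  obtain ⟨a, ha, h1⟩ := h1
  obtain ⟨b, hb, h2⟩ := h2
  refine ⟨b * a, mul_mem hb ha, ?_⟩
  rw [← h2, ← h1, Subgroup.map_map]
  rfl

lemma map_zpowers_Pt (a : MulAut G) (x : G) :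
    Subgroup.map a.toMonoidHom (zpowers (Pt p x)) = zpowers (Pt p (a x)) := by
  rw [MonoidHom.map_zpowers]
  congr 1
  show a (Pt p x) = Pt p (a x)
  rw [Pt, Pt, map_pow, a.orderOf_eq]

/-- Invariant attached to a vertex: the subgroup generated by the canonical order-p element
of a representative. -/
noncomputable def Fv (p : ℕ) (V : DeltaVerts G A) : Subgroup G :=
  zpowers (Pt p V.2.choose)

variable {A}

lemma Fv_rel {p : ℕ} {V : DeltaVerts G A} {x : G} (hx : x ∈ V.1) :
    relA A (Fv A p V) (zpowers (Pt p x)) := by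
  have hV := V.2.choose_spec.2
  rw [hV] at hx
  obtain ⟨a, ha, rfl⟩ := hx
  exact ⟨a, ha, map_zpowers_Pt a _⟩

lemma mem_ne_one {V : DeltaVerts G A} {x : G} (hx : x ∈ V.1) : x ≠ 1 := by
  have hV := V.2.choose_spec.2
  have h1 := V.2.choose_spec.1
  rw [hV] at hx
  obtain ⟨a, -, rfl⟩ := hx
  simpa using h1

lemma adj_rel {p : ℕ} (hp : p.Prime) (hG : IsPGroup p G) {U V : DeltaVerts G A}
    (h : (Delta G A).Adj U V) : relA A (Fv A p U) (Fv A p V) := by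
  obtain ⟨-, x, hxU, y, hyV, hcyc⟩ := h
  have hx : x ≠ 1 := mem_ne_one hxU
  have hy : y ≠ 1 := mem_ne_one hyV
  have hxmem : x ∈ Subgroup.closure {x, y} := subset_closure (Set.mem_insert x {y})
  have hymem : y ∈ Subgroup.closure {x, y} := subset_closure (Set.mem_insert_of_mem _ rfl)
  have hxy : zpowers (Pt p x) = zpowers (Pt p y) :=
    zpowers_eq_of_orderOf_eq hp hG hcyc (pow_mem hxmem _) (pow_mem hymem _)
      (orderOf_Pt hp hG hx) (orderOf_Pt hp hG hy)
  have e1 : relA A (Fv A p U) (zpowers (Pt p x)) := Fv_rel hxU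
  have e2 : relA A (Fv A p V) (zpowers (Pt p y)) := Fv_rel hyV
  rw [hxy] at e1
  exact relA_trans A e1 (relA_symm A e2)

lemma reach_rel {p : ℕ} (hp : p.Prime) (hG : IsPGroup p G) {U V : DeltaVerts G A}
    (h : (Delta G A).Reachable U V) : relA A (Fv A p U) (Fv A p V) := by
  obtain ⟨w⟩ := h
  induction w with
  | nil => exact relA_refl A _
  | cons h _ ih => exact relA_trans A (adj_rel hp hG h) ih

end Aux

theorem stmt3 {G : Type*} [Group G] [Finite G] (A : Subgroup (MulAut G))
    (p : ℕ) (hp : p.Prime) (hG : IsPGroup p G)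
    (htrans : ¬ ∀ S T : Subgroup G, Nat.card S = p → Nat.card T = p →
        ∃ a ∈ A, Subgroup.map a.toMonoidHom S = T) :
    ¬ (Delta G A).Connected := by
  push_neg at htrans
  obtain ⟨S, T, hS, hT, hST⟩ := htrans
  -- extract nontrivial elements of S and T
  have getelt : ∀ (H : Subgroup G), Nat.card H = p →
      ∃ x : G, ∃ hx : x ≠ 1, zpowers (Pt p x) = H := by
    intro H hH
    have : Nontrivial H := Finite.one_lt_card_iff_nontrivial.mp (by rw [hH]; exact hp.one_lt)
    obtain ⟨s, hs⟩ := exists_ne (1 : H)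
    refine ⟨(s : G), fun h => hs (by exact_mod_cast h), ?_⟩
    have hmem : (s : G) ∈ H := s.2
    have hord : orderOf (s : G) ∣ p := by
      rw [← hH]; exact H.orderOf_dvd_natCard hmem
    have hop : orderOf (s : G) = p := by
      rcases (Nat.Prime.eq_one_or_self_of_dvd hp _ hord) with h | h
      · exact absurd (orderOf_eq_one_iff.mp h) (fun hh => hs (by exact_mod_cast hh))
      · exact h
    have hPt : Pt p (s : G) = (s : G) := by
      rw [Pt, hop, Nat.div_self hp.pos, pow_one]
    rw [hPt]
    refine eq_of_le_of_card_ge (zpowers_le.mpr hmem) ?_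
    rw [Nat.card_zpowers, hop, hH]
  obtain ⟨x, hx, hxS⟩ := getelt S hS
  obtain ⟨y, hy, hyT⟩ := getelt T hT
  intro hcon
  have hreach : (Delta G A).Reachable (vtx A x hx) (vtx A y hy) := hcon.preconnected _ _
  have h1 : relA A (Fv A p (vtx A x hx)) (zpowers (Pt p x)) :=
    Fv_rel ⟨1, A.one_mem, rfl⟩
  have h2 : relA A (Fv A p (vtx A y hy)) (zpowers (Pt p y)) :=
    Fv_rel ⟨1, A.one_mem, rfl⟩
  have h3 := reach_rel hp hG hreach
  have : relA A S T := by
    rw [← hxS, ← hyT]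
    exact relA_trans A (relA_symm A h1) (relA_trans A h3 h2)
  obtain ⟨a, ha, hmap⟩ := this
  exact hST a ha hmap
end

section
/- Let G be a finite group with A ≤ Aut(G), and suppose Z(G) is not a p-group for any prime p (i.e., |Z(G)| is divisible by at least two distinct primes). Then Δ(G,A) is connected and its diameter is at most 4. -/
open Subgroup

lemma isCyclic_zpowers' {G : Type*} [Group G] (g : G) : IsCyclic (Subgroup.zpowers g) := by
  refine ⟨⟨⟨g, mem_zpowers g⟩, fun x => ?_⟩⟩
  obtain ⟨k, hk⟩ := x.2
  exact ⟨k, Subtype.ext (by simpa using hk)⟩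

lemma cyclic_of_le_zpowers {G : Type*} [Group G] {g : G} {H : Subgroup G}
    (h : H ≤ Subgroup.zpowers g) : IsCyclic H := by
  have := isCyclic_zpowers' g
  exact Subgroup.isCyclic_of_le h

lemma isCyclic_closure_pair {G : Type*} [Group G] {x y : G} (hc : Commute x y)
    (hco : (orderOf x).Coprime (orderOf y)) :
    IsCyclic (Subgroup.closure ({x, y} : Set G)) := by
  apply cyclic_of_le_zpowers (g := x * y)
  rw [Subgroup.closure_le]
  have hx : x ∈ Subgroup.zpowers (x * y) := by
    obtain ⟨m, hm⟩ := exists_pow_eq_self_of_coprime (x := x) (n := orderOf y) hco.symm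
    have h1 : (x * y) ^ orderOf y = x ^ orderOf y := by
      rw [hc.mul_pow, pow_orderOf_eq_one, mul_one]
    have : ((x * y) ^ orderOf y) ^ m ∈ Subgroup.zpowers (x * y) :=
      Subgroup.pow_mem _ (Subgroup.pow_mem _ (mem_zpowers _) _) _
    rwa [h1, hm] at this
  have hy : y ∈ Subgroup.zpowers (x * y) := by
    obtain ⟨m, hm⟩ := exists_pow_eq_self_of_coprime (x := y) (n := orderOf x) hco
    have h1 : (x * y) ^ orderOf x = y ^ orderOf x := by
      rw [hc.mul_pow, pow_orderOf_eq_one, one_mul]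
    have : ((x * y) ^ orderOf x) ^ m ∈ Subgroup.zpowers (x * y) :=
      Subgroup.pow_mem _ (Subgroup.pow_mem _ (mem_zpowers _) _) _
    rwa [h1, hm] at this
  rintro z hz
  rcases hz with rfl | hz
  · exact hx
  · rw [Set.mem_singleton_iff] at hz; subst hz; exact hy

lemma mem_vtx {G : Type*} [Group G] (A : Subgroup (MulAut G)) (x : G) (hx : x ≠ 1) :
    x ∈ (vtx A x hx).1 := ⟨1, A.one_mem, rfl⟩

/-- A single step: if closure {x,y} is cyclic, the two vertices are reachable with dist ≤ 1. -/
lemma delta_step {G : Type*} [Group G] (A : Subgroup (MulAut G)) {x y : G}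
    (hx : x ≠ 1) (hy : y ≠ 1) (hc : IsCyclic (Subgroup.closure ({x, y} : Set G))) :
    (Delta G A).Reachable (vtx A x hx) (vtx A y hy) ∧
      (Delta G A).dist (vtx A x hx) (vtx A y hy) ≤ 1 := by
  by_cases he : vtx A x hx = vtx A y hy
  · rw [he]
    exact ⟨SimpleGraph.Reachable.refl _, by simp [SimpleGraph.dist_self]⟩
  · have hadj : (Delta G A).Adj (vtx A x hx) (vtx A y hy) :=
      ⟨he, x, mem_vtx A x hx, y, mem_vtx A y hy, hc⟩
    refine ⟨hadj.reachable, ?_⟩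
    have := SimpleGraph.dist_le (SimpleGraph.Walk.cons hadj SimpleGraph.Walk.nil)
    simpa using this

theorem stmt4 {G : Type*} [Group G] [Finite G] (A : Subgroup (MulAut G))
    (h : ∃ p q : ℕ, p.Prime ∧ q.Prime ∧ p ≠ q ∧
        p ∣ Nat.card (Subgroup.center G) ∧ q ∣ Nat.card (Subgroup.center G)) :
    (Delta G A).Connected ∧ ∀ u v : DeltaVerts G A, (Delta G A).dist u v ≤ 4 := by
  obtain ⟨p, q, hp, hq, hpq, hdp, hdq⟩ := h
  haveI : Fact p.Prime := ⟨hp⟩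
  haveI : Fact q.Prime := ⟨hq⟩
  obtain ⟨a₀, ha₀⟩ := exists_prime_orderOf_dvd_card' (G := Subgroup.center G) p hdp
  obtain ⟨b₀, hb₀⟩ := exists_prime_orderOf_dvd_card' (G := Subgroup.center G) q hdq
  set a : G := (a₀ : G) with ha_def
  set b : G := (b₀ : G) with hb_def
  have hoa : orderOf a = p := by rw [ha_def, Subgroup.orderOf_coe, ha₀]
  have hob : orderOf b = q := by rw [hb_def, Subgroup.orderOf_coe, hb₀]
  have ha1 : a ≠ 1 := by
    intro h1; rw [h1, orderOf_one] at hoa; exact hp.one_lt.ne' hoa.symm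
  have hb1 : b ≠ 1 := by
    intro h1; rw [h1, orderOf_one] at hob; exact hq.one_lt.ne' hob.symm
  have hamem : a ∈ Subgroup.center G := a₀.2
  have hbmem : b ∈ Subgroup.center G := b₀.2
  have hpq' : Nat.Coprime p q := (Nat.coprime_primes hp hq).mpr hpq
  -- the central a-b edge
  have hab : IsCyclic (Subgroup.closure ({a, b} : Set G)) := by
    apply isCyclic_closure_pair
    · exact Subgroup.mem_center_iff.mp hbmem a
    · rw [hoa, hob]; exact hpq'
  -- every nontrivial g reaches b in at most two steps
  have key : ∀ (g : G) (hg : g ≠ 1),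
      (Delta G A).Reachable (vtx A g hg) (vtx A b hb1) ∧
        ∃ (c : G) (hc1 : c ≠ 1),
          ((Delta G A).dist (vtx A g hg) (vtx A c hc1) ≤ 1 ∧
           (Delta G A).dist (vtx A c hc1) (vtx A b hb1) ≤ 1) := by
    intro g hg
    by_cases hpd : p ∣ orderOf g
    · -- use c = g ^ (orderOf g / p), of order p
      set c : G := g ^ (orderOf g / p) with hc_def
      have hno : orderOf g ≠ 0 := by
        have := orderOf_pos g; omega
      have hoc : orderOf c = p := orderOf_pow_orderOf_div hno hpd
      have hc1 : c ≠ 1 := by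
        intro h1; rw [h1, orderOf_one] at hoc; exact hp.one_lt.ne' hoc.symm
      have step1 : IsCyclic (Subgroup.closure ({g, c} : Set G)) := by
        apply cyclic_of_le_zpowers (g := g)
        rw [Subgroup.closure_le]
        rintro z hz
        rcases hz with hz | hz
        · rw [hz]; exact mem_zpowers g
        · rw [Set.mem_singleton_iff] at hz; rw [hz]
          exact Subgroup.pow_mem _ (mem_zpowers g) _
      have step2 : IsCyclic (Subgroup.closure ({c, b} : Set G)) := by
        apply isCyclic_closure_pair
        · exact Subgroup.mem_center_iff.mp hbmem c
        · rw [hoc, hob]; exact hpq'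
      obtain ⟨r1, d1⟩ := delta_step A hg hc1 step1
      obtain ⟨r2, d2⟩ := delta_step A hc1 hb1 step2
      exact ⟨r1.trans r2, c, hc1, d1, d2⟩
    · -- g has order coprime to p: connect directly to a, then a to b
      have step1 : IsCyclic (Subgroup.closure ({g, a} : Set G)) := by
        apply isCyclic_closure_pair
        · exact (Subgroup.mem_center_iff.mp hamem g)
        · rw [hoa]
          exact (Nat.coprime_comm.mp (hp.coprime_iff_not_dvd.mpr hpd))
      obtain ⟨r1, d1⟩ := delta_step A hg ha1 step1
      obtain ⟨r2, d2⟩ := delta_step A ha1 hb1 hab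
      exact ⟨r1.trans r2, a, ha1, d1, d2⟩
  -- canonical form of vertices
  have vert_form : ∀ u : DeltaVerts G A, ∃ (x : G) (hx : x ≠ 1), u = vtx A x hx := by
    rintro ⟨S, x, hx, rfl⟩
    exact ⟨x, hx, rfl⟩
  have hpre : (Delta G A).Preconnected := by
    intro u v
    obtain ⟨x, hx, rfl⟩ := vert_form u
    obtain ⟨y, hy, rfl⟩ := vert_form v
    exact ((key x hx).1).trans ((key y hy).1).symm
  haveI : Nonempty (DeltaVerts G A) := ⟨vtx A b hb1⟩
  have hconn : (Delta G A).Connected := ⟨hpre⟩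
  refine ⟨hconn, fun u v => ?_⟩
  obtain ⟨x, hx, rfl⟩ := vert_form u
  obtain ⟨y, hy, rfl⟩ := vert_form v
  obtain ⟨_, c, hc1, dc1, dc2⟩ := key x hx
  obtain ⟨_, d, hd1, dd1, dd2⟩ := key y hy
  have t1 := hconn.dist_triangle (u := vtx A x hx) (v := vtx A c hc1) (w := vtx A b hb1)
  have t2 := hconn.dist_triangle (u := vtx A x hx) (v := vtx A b hb1) (w := vtx A y hy)
  have t3 := hconn.dist_triangle (u := vtx A b hb1) (v := vtx A d hd1) (w := vtx A y hy)
  have hd2' : (Delta G A).dist (vtx A d hd1) (vtx A y hy) ≤ 1 := by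
    rwa [SimpleGraph.dist_comm]
  have hbd : (Delta G A).dist (vtx A b hb1) (vtx A d hd1) ≤ 1 := by
    rwa [SimpleGraph.dist_comm]
  omega
end

section
/- Let G be a finite nilpotent group that is not a p-group, and A ≤ Aut(G). If for every prime p dividing |G| the Sylow p-subgroup of G has only one A-orbit of subgroups of order p, then Δ(G,A) is connected with diameter at most 2. -/
open Subgroup

set_option maxHeartbeats 1000000 in
/-- In a finite nilpotent group, elements of coprime order commute. -/
lemma commute_of_coprime {G : Type*} [Group G] [Finite G] [Group.IsNilpotent G] {x y : G}
    (h : Nat.Coprime (orderOf x) (orderOf y)) : Commute x y := by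
  obtain ⟨e⟩ : Nonempty ((∀ p : (Nat.card G).primeFactors, ∀ P : Sylow p G, (↑P : Subgroup G)) ≃* G) :=
    ((isNilpotent_of_finite_tfae (G := G)).out 0 4).mp ‹_›
  set f := e.symm x with hf
  set g := e.symm y with hg
  have hfx : orderOf f = orderOf x := orderOf_injective e.symm.toMonoidHom e.symm.injective x
  have hgy : orderOf g = orderOf y := orderOf_injective e.symm.toMonoidHom e.symm.injective y
  have key : ∀ (p : (Nat.card G).primeFactors) (P : Sylow (p : ℕ) G), f p P = 1 ∨ g p P = 1 := by
    intro p P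
    haveI : Fact (Nat.Prime (p : ℕ)) := ⟨Nat.prime_of_mem_primeFactors p.2⟩
    have hdf : orderOf (f p P) ∣ orderOf x := by
      calc orderOf (f p P) ∣ orderOf (f p) := orderOf_map_dvd (Pi.evalMonoidHom _ P) (f p)
        _ ∣ orderOf f := orderOf_map_dvd (Pi.evalMonoidHom _ p) f
        _ = orderOf x := hfx
    have hdg : orderOf (g p P) ∣ orderOf y := by
      calc orderOf (g p P) ∣ orderOf (g p) := orderOf_map_dvd (Pi.evalMonoidHom _ P) (g p)
        _ ∣ orderOf g := orderOf_map_dvd (Pi.evalMonoidHom _ p) g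
        _ = orderOf y := hgy
    obtain ⟨k, hk⟩ := IsPGroup.iff_orderOf.mp P.isPGroup' (f p P)
    obtain ⟨l, hl⟩ := IsPGroup.iff_orderOf.mp P.isPGroup' (g p P)
    rcases Nat.eq_zero_or_pos k with hk0 | hk0
    · left; rw [← orderOf_eq_one_iff, hk, hk0, pow_zero]
    rcases Nat.eq_zero_or_pos l with hl0 | hl0
    · right; rw [← orderOf_eq_one_iff, hl, hl0, pow_zero]
    exfalso
    have hp1 : (p : ℕ) ∣ orderOf x :=
      dvd_trans (hk ▸ dvd_pow_self _ hk0.ne' : (p:ℕ) ∣ orderOf (f p P)) hdf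
    have hp2 : (p : ℕ) ∣ orderOf y :=
      dvd_trans (hl ▸ dvd_pow_self _ hl0.ne' : (p:ℕ) ∣ orderOf (g p P)) hdg
    exact Nat.Prime.one_lt (Nat.prime_of_mem_primeFactors p.2) |>.ne'
      (Nat.eq_one_of_dvd_coprimes h hp1 hp2)
  have hcfg : Commute f g := by
    funext p P
    rcases key p P with h1 | h1 <;> simp [Commute, SemiconjBy, Pi.mul_apply, h1]
  have hxy : x * y = e (f * g) := by rw [map_mul, hf, hg, e.apply_symm_apply, e.apply_symm_apply]
  have hyx : y * x = e (g * f) := by rw [map_mul, hf, hg, e.apply_symm_apply, e.apply_symm_apply]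
  unfold Commute SemiconjBy
  rw [hxy, hyx, hcfg]

section Helpers

variable {G : Type*} [Group G] (A : Subgroup (MulAut G))

lemma mem_aorb_self (x : G) : x ∈ aorb A x := ⟨1, A.one_mem, rfl⟩

lemma orderOf_of_mem_aorb {x y : G} (h : y ∈ aorb A x) : orderOf y = orderOf x := by
  obtain ⟨a, -, rfl⟩ := h
  exact orderOf_injective a.toMonoidHom a.injective x

lemma vtx_ne {x y : G} (hx : x ≠ 1) (hy : y ≠ 1) (h : orderOf x ≠ orderOf y) :
    vtx A x hx ≠ vtx A y hy := by
  intro he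
  have h1 : aorb A x = aorb A y := congrArg Subtype.val he
  have : y ∈ aorb A x := h1 ▸ mem_aorb_self A y
  exact h (orderOf_of_mem_aorb A this).symm

lemma isCyclic_zpowers (x : G) : IsCyclic (zpowers x) :=
  ⟨⟨⟨x, mem_zpowers x⟩, fun z => by
    obtain ⟨k, hk⟩ := z.2
    exact ⟨k, Subtype.ext (by simpa [Subgroup.coe_zpow] using hk)⟩⟩⟩

lemma closure_pair_eq {x y : G} (h : y ∈ zpowers x) :
    Subgroup.closure {x, y} = zpowers x := by
  apply le_antisymm
  · rw [closure_le]
    intro z hz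
    rcases hz with hz | hz
    · exact hz ▸ mem_zpowers x
    · rw [Set.mem_singleton_iff] at hz
      exact hz ▸ h
  · rw [zpowers_le]
    exact subset_closure (Set.mem_insert x {y})

lemma isCyclic_closure_of_mem {x y : G} (h : y ∈ zpowers x) :
    IsCyclic (Subgroup.closure {x, y} : Subgroup G) := by
  rw [closure_pair_eq h]; exact _root_.isCyclic_zpowers x

lemma mem_zpowers_mul {x y : G} [Finite G] (hc : Commute x y)
    (h : Nat.Coprime (orderOf y) (orderOf x)) : x ∈ zpowers (x * y) := by
  obtain ⟨k, hk⟩ := exists_pow_eq_self_of_coprime (x := x) (n := orderOf y) h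
  have h1 : (x * y) ^ orderOf y = x ^ orderOf y := by
    rw [hc.mul_pow, pow_orderOf_eq_one, mul_one]
  have h2 : ((x * y) ^ orderOf y) ^ k ∈ zpowers (x * y) :=
    Subgroup.pow_mem _ (Subgroup.pow_mem _ (mem_zpowers _) _) _
  rwa [h1, hk] at h2

lemma isCyclic_closure_of_commute {x y : G} [Finite G] (hc : Commute x y)
    (h : Nat.Coprime (orderOf x) (orderOf y)) :
    IsCyclic (Subgroup.closure {x, y} : Subgroup G) := by
  have hx : x ∈ zpowers (x * y) := mem_zpowers_mul hc h.symm
  have hy : y ∈ zpowers (x * y) := by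
    have h2 := mem_zpowers_mul hc.symm h
    rwa [← hc.eq] at h2
  have hcl : Subgroup.closure {x, y} = zpowers (x * y) := by
    apply le_antisymm
    · rw [closure_le]
      intro z hz
      rcases hz with hz | hz
      · exact hz ▸ hx
      · rw [Set.mem_singleton_iff] at hz
        exact hz ▸ hy
    · rw [zpowers_le]
      exact mul_mem (subset_closure (Set.mem_insert x {y}))
        (subset_closure (Set.mem_insert_of_mem x rfl))
  rw [hcl]; exact _root_.isCyclic_zpowers _

lemma adj_of_mem_zpowers {x y : G} (hx : x ≠ 1) (hy : y ≠ 1) (hm : y ∈ zpowers x)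
    (hne : vtx A x hx ≠ vtx A y hy) : (Delta G A).Adj (vtx A x hx) (vtx A y hy) :=
  ⟨hne, x, mem_aorb_self A x, y, mem_aorb_self A y, isCyclic_closure_of_mem hm⟩

lemma adj_of_commute {x y : G} [Finite G] (hx : x ≠ 1) (hy : y ≠ 1) (hc : Commute x y)
    (h : Nat.Coprime (orderOf x) (orderOf y)) :
    (Delta G A).Adj (vtx A x hx) (vtx A y hy) := by
  refine ⟨vtx_ne A hx hy ?_, x, mem_aorb_self A x, y, mem_aorb_self A y,
    isCyclic_closure_of_commute hc h⟩
  intro he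
  rw [he] at h
  exact hy (orderOf_eq_one_iff.mp ((Nat.gcd_self _).symm.trans h))

lemma exists_prime_order_mem_zpowers [Finite G] {x : G} {p : ℕ} (hp : p.Prime)
    (hd : p ∣ orderOf x) : ∃ z ∈ zpowers x, orderOf z = p := by
  refine ⟨x ^ (orderOf x / p), Subgroup.pow_mem _ (mem_zpowers x) _, ?_⟩
  rw [orderOf_pow, Nat.gcd_eq_right (Nat.div_dvd_of_dvd hd),
    Nat.div_div_self hd (orderOf_pos x).ne']

end Helpers

theorem stmt7 {G : Type*} [Group G] [Finite G] (A : Subgroup (MulAut G))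
    [Group.IsNilpotent G]
    (h : ∃ p q : ℕ, p.Prime ∧ q.Prime ∧ p ≠ q ∧ p ∣ Nat.card G ∧ q ∣ Nat.card G)
    (htrans : ∀ p : ℕ, p.Prime → p ∣ Nat.card G →
        ∀ S T : Subgroup G, Nat.card S = p → Nat.card T = p →
          ∃ a ∈ A, Subgroup.map a.toMonoidHom S = T) :
    (Delta G A).Connected ∧ ∀ u v : DeltaVerts G A, (Delta G A).dist u v ≤ 2 := by
  classical
  obtain ⟨p, q, hp, hq, hpq, hpG, hqG⟩ := h
  haveI hFT : Fintype G := Fintype.ofFinite G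
  haveI : Fact p.Prime := ⟨hp⟩
  haveI : Fact q.Prime := ⟨hq⟩
  -- An auxiliary adjacency construction using the transitivity hypothesis.
  have hadjtrans : ∀ (x w : G) (hx : x ≠ 1) (hw : w ≠ 1) (r : ℕ), r.Prime → orderOf w = r →
      r ∣ orderOf x → orderOf x ≠ r → (Delta G A).Adj (vtx A x hx) (vtx A w hw) := by
    intro x w hx hw r hr hword hrx hxr
    obtain ⟨w2, hw2mem, hw2ord⟩ := exists_prime_order_mem_zpowers hr hrx
    have hrG : r ∣ Nat.card G := hword ▸ orderOf_dvd_natCard w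
    obtain ⟨a, haA, hmap⟩ := htrans r hr hrG (zpowers w) (zpowers w2)
      (by rw [Nat.card_zpowers, hword]) (by rw [Nat.card_zpowers, hw2ord])
    have haw : a w ∈ zpowers w2 := by
      rw [← hmap]
      exact ⟨w, mem_zpowers w, rfl⟩
    have haw' : a w ∈ zpowers x := (zpowers_le.mpr hw2mem) haw
    refine ⟨vtx_ne A hx hw (by rw [hword]; exact hxr), x, mem_aorb_self A x,
      a w, ⟨a, haA, rfl⟩, isCyclic_closure_of_mem haw'⟩
  have key : ∀ u v : DeltaVerts G A, u = v ∨ (Delta G A).Adj u v ∨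
      ∃ w, (Delta G A).Adj u w ∧ (Delta G A).Adj w v := by
    intro u v
    by_cases huv : u = v
    · exact Or.inl huv
    obtain ⟨x, hx, hxS⟩ := u.2
    obtain ⟨y, hy, hyS⟩ := v.2
    have hu : u = vtx A x hx := Subtype.ext hxS
    have hv : v = vtx A y hy := Subtype.ext hyS
    rw [hu, hv] at huv ⊢
    have hm1 : orderOf x ≠ 1 := fun h' => hx (orderOf_eq_one_iff.mp h')
    have hn1 : orderOf y ≠ 1 := fun h' => hy (orderOf_eq_one_iff.mp h')
    -- generic step: if some prime r divides orderOf y but not orderOf x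
    have step : ∀ (x y : G) (hx : x ≠ 1) (hy : y ≠ 1), vtx A x hx ≠ vtx A y hy →
        (∃ r : ℕ, r.Prime ∧ r ∣ orderOf y ∧ ¬ r ∣ orderOf x) →
        (Delta G A).Adj (vtx A x hx) (vtx A y hy) ∨
        ∃ w, (Delta G A).Adj (vtx A x hx) w ∧ (Delta G A).Adj w (vtx A y hy) := by
      intro x y hx hy hne ⟨r, hr, hrn, hrm⟩
      obtain ⟨w, hwmem, hword⟩ := exists_prime_order_mem_zpowers hr hrn
      have hw1 : w ≠ 1 := by
        intro h'
        rw [h', orderOf_one] at hword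
        exact hr.one_lt.ne' hword.symm
      have hcop : Nat.Coprime (orderOf x) (orderOf w) := by
        rw [hword]
        exact (hr.coprime_iff_not_dvd.mpr hrm).symm
      have hadj1 : (Delta G A).Adj (vtx A x hx) (vtx A w hw1) :=
        adj_of_commute A hx hw1 (commute_of_coprime hcop) hcop
      by_cases hwy : vtx A w hw1 = vtx A y hy
      · rw [hwy] at hadj1
        exact Or.inl hadj1
      · exact Or.inr ⟨vtx A w hw1, hadj1,
          (adj_of_mem_zpowers A hy hw1 hwmem (Ne.symm hwy)).symm⟩
    by_cases h1 : ∃ r : ℕ, r.Prime ∧ r ∣ orderOf y ∧ ¬ r ∣ orderOf x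
    · exact Or.inr (step x y hx hy huv h1)
    by_cases h2 : ∃ r : ℕ, r.Prime ∧ r ∣ orderOf x ∧ ¬ r ∣ orderOf y
    · rcases step y x hy hx (Ne.symm huv) h2 with h' | ⟨w, hw1, hw2⟩
      · exact Or.inr (Or.inl h'.symm)
      · exact Or.inr (Or.inr ⟨w, hw2.symm, hw1.symm⟩)
    push_neg at h1 h2
    -- now every prime divides orderOf x iff it divides orderOf y
    by_cases hpm : p ∣ orderOf x ∨ p ∣ orderOf y
    · have hpb : p ∣ orderOf x ∧ p ∣ orderOf y := by
        rcases hpm with h' | h'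
        · exact ⟨h', h2 p hp h'⟩
        · exact ⟨h1 p hp h', h'⟩
      by_cases hqm : q ∣ orderOf x ∨ q ∣ orderOf y
      · have hqb : q ∣ orderOf x ∧ q ∣ orderOf y := by
          rcases hqm with h' | h'
          · exact ⟨h', h2 q hq h'⟩
          · exact ⟨h1 q hq h', h'⟩
        -- both p and q divide both orders; use htrans via prime q
        obtain ⟨w, hwmem, hword⟩ := exists_prime_order_mem_zpowers hq hqb.2
        have hw1 : w ≠ 1 := by
          intro h'
          rw [h', orderOf_one] at hword
          exact hq.one_lt.ne' hword.symm
        have hmq : orderOf x ≠ q := by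
          intro h'
          exact hpq ((Nat.prime_dvd_prime_iff_eq hp hq).mp (h' ▸ hpb.1))
        have hnq : orderOf y ≠ q := by
          intro h'
          exact hpq ((Nat.prime_dvd_prime_iff_eq hp hq).mp (h' ▸ hpb.2))
        refine Or.inr (Or.inr ⟨vtx A w hw1, hadjtrans x w hx hw1 q hq hword hqb.1 hmq, ?_⟩)
        exact (adj_of_mem_zpowers A hy hw1 hwmem
          (vtx_ne A hy hw1 (by rw [hword]; exact hnq))).symm
      · -- q divides neither order: Cauchy element of order q
        push_neg at hqm
        obtain ⟨w, hword⟩ := exists_prime_orderOf_dvd_card (G := G) q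
          (by rwa [← Nat.card_eq_fintype_card])
        have hw1 : w ≠ 1 := by
          intro h'
          rw [h', orderOf_one] at hword
          exact hq.one_lt.ne' hword.symm
        have hcop1 : Nat.Coprime (orderOf x) (orderOf w) := by
          rw [hword]; exact (hq.coprime_iff_not_dvd.mpr hqm.1).symm
        have hcop2 : Nat.Coprime (orderOf y) (orderOf w) := by
          rw [hword]; exact (hq.coprime_iff_not_dvd.mpr hqm.2).symm
        exact Or.inr (Or.inr ⟨vtx A w hw1,
          adj_of_commute A hx hw1 (commute_of_coprime hcop1) hcop1,
          (adj_of_commute A hy hw1 (commute_of_coprime hcop2) hcop2).symm⟩)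
    · -- p divides neither order
      push_neg at hpm
      obtain ⟨w, hword⟩ := exists_prime_orderOf_dvd_card (G := G) p
        (by rwa [← Nat.card_eq_fintype_card])
      have hw1 : w ≠ 1 := by
        intro h'
        rw [h', orderOf_one] at hword
        exact hp.one_lt.ne' hword.symm
      have hcop1 : Nat.Coprime (orderOf x) (orderOf w) := by
        rw [hword]; exact (hp.coprime_iff_not_dvd.mpr hpm.1).symm
      have hcop2 : Nat.Coprime (orderOf y) (orderOf w) := by
        rw [hword]; exact (hp.coprime_iff_not_dvd.mpr hpm.2).symm
      exact Or.inr (Or.inr ⟨vtx A w hw1,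
        adj_of_commute A hx hw1 (commute_of_coprime hcop1) hcop1,
        (adj_of_commute A hy hw1 (commute_of_coprime hcop2) hcop2).symm⟩)
  have hnonempty : Nonempty (DeltaVerts G A) := by
    obtain ⟨x, hxord⟩ := exists_prime_orderOf_dvd_card (G := G) p
      (by rwa [← Nat.card_eq_fintype_card])
    have hx : x ≠ 1 := by
      intro h'
      rw [h', orderOf_one] at hxord
      exact hp.one_lt.ne' hxord.symm
    exact ⟨vtx A x hx⟩
  constructor
  · haveI := hnonempty
    refine SimpleGraph.Connected.mk ?_
    intro u v
    rcases key u v with rfl | h' | ⟨w, h1', h2'⟩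
    · exact SimpleGraph.Reachable.refl _
    · exact h'.reachable
    · exact h1'.reachable.trans h2'.reachable
  · intro u v
    rcases key u v with rfl | h' | ⟨w, h1', h2'⟩
    · simp [SimpleGraph.dist_self]
    · have := SimpleGraph.dist_le h'.toWalk
      simpa using Nat.le_trans this (by norm_num)
    · have := SimpleGraph.dist_le (SimpleGraph.Walk.cons h1' h2'.toWalk)
      simpa using this
end
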